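/- Let K be an algebraically closed field and g > 1 an integer satisfying Condition (*). Let J ⊆ M(2g+1) be a g-element subset and let ε1, ε2 ∈ M(2g+1) be distinct, with η1 = η(ε1) and η2 = η(ε2). Then the polynomial in the variable b given by Ψ_{J,b}(η1)·Ψ_{∁J,b}(η2) − Ψ_{J,b}(η2)·Ψ_{∁J,b}(η1) has degree exactly 2g − 1 in b. -/

import Mathlib

open Polynomial Finset

/-- `Mset K n` is the set of `n`-th roots of unity in `K` other than `1`. -/
noncomputable def Mset (K : Type*) [Field K] (n : ℕ) : Finset K :=
  open scoped Classical in
  (Polynomial.nthRootsFinset n (1 : K)).filter (· ≠ 1)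

/-- `Ψ_{J,b}(c) = ∏_{ε ∈ J} (c + b·η(ε))`, with `η(ε) = 1/(ε-1)`, regarded as a
polynomial in the indeterminate `b` (named `X` here). -/
noncomputable def PsiB {K : Type*} [Field K] (J : Finset K) (c : K) : K[X] :=
  ∏ ε ∈ J, (C c + C ((ε - 1)⁻¹) * X)

section Poly
variable {K : Type*} [Field K]

lemma psib_factor (s : Finset K) (hs : ∀ ε ∈ s, ε ≠ 1) (c : K) :
    PsiB s c = C (∏ ε ∈ s, (ε - 1)⁻¹) * ∏ ε ∈ s, (X + C (c * (ε - 1))) := by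
  rw [PsiB, map_prod, ← Finset.prod_mul_distrib]
  refine Finset.prod_congr rfl fun ε hε => ?_
  have h1 : ε - 1 ≠ 0 := sub_ne_zero.mpr (hs ε hε)
  have hc : (ε - 1)⁻¹ * (c * (ε - 1)) = c := by field_simp
  rw [mul_add, ← C_mul, hc, add_comm]

lemma prodlin_monic (s : Finset K) (c : K) :
    (∏ ε ∈ s, (X + C (c * (ε - 1)))).Monic :=
  monic_prod_of_monic _ _ fun ε _ => monic_X_add_C _

lemma prodlin_natDegree (s : Finset K) (c : K) :
    (∏ ε ∈ s, (X + C (c * (ε - 1)))).natDegree = s.card := by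
  rw [natDegree_prod_of_monic _ _ fun ε _ => monic_X_add_C _]
  simp only [natDegree_X_add_C, Finset.sum_const, smul_eq_mul, mul_one]

lemma prodlin_nextCoeff (s : Finset K) (c : K) :
    (∏ ε ∈ s, (X + C (c * (ε - 1)))).nextCoeff = c * ∑ ε ∈ s, (ε - 1) := by
  rw [Polynomial.Monic.nextCoeff_prod _ _ fun ε _ => monic_X_add_C _, Finset.mul_sum]
  exact Finset.sum_congr rfl fun ε _ => nextCoeff_X_add_C _

end Poly

section Aux

variable {K : Type*} [Field K]

-- In char 0, an element integral over ℤ cannot satisfy 2*T + 1 = 0.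
lemma aux_char0 [CharZero K] {T : K} (hT : IsIntegral ℤ T) : 2 * T + 1 ≠ 0 := by
  intro h
  have hT2 : T = algebraMap ℚ K (-(1/2) : ℚ) := by
    have : (algebraMap ℚ K) (-(1/2) : ℚ) = ((-(1/2) : ℚ) : K) := eq_ratCast _ _
    rw [this]
    push_cast
    have h2 : (2:K) ≠ 0 := two_ne_zero
    field_simp
    linear_combination h
  haveI : IsScalarTower ℤ ℚ K := IsScalarTower.of_algebraMap_eq (fun x => by simp)
  rw [hT2, isIntegral_algebraMap_iff (algebraMap ℚ K).injective] at hT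
  obtain ⟨y, hy⟩ := IsIntegrallyClosed.isIntegral_iff.mp hT
  have : ((y : ℚ)) = -(1/2) := by rw [← hy]; simp
  have h2 : ((2 * y : ℤ) : ℚ) = -1 := by push_cast; linarith
  have : (2 * y : ℤ) = -1 := by exact_mod_cast h2
  omega

end Aux

section CharP

variable {K : Type*} [Field K]

-- closure of roots of a polynomial over ZMod p under Frobenius
lemma aux_frob_root (p : ℕ) (hp : p.Prime) [CharP K p]
    (m : Polynomial (ZMod p)) (x : K) :
    letI : Algebra (ZMod p) K := ZMod.algebra _ _
    aeval x m = 0 → aeval (x ^ p) m = 0 := by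
  letI : Algebra (ZMod p) K := ZMod.algebra _ _
  haveI : Fact p.Prime := ⟨hp⟩
  intro h
  have hfr : (frobenius K p) (aeval x m) = aeval (x ^ p) m := by
    rw [aeval_def, aeval_def, hom_eval₂]
    congr 1
    exact Subsingleton.elim _ _
  rw [h, map_zero] at hfr
  exact hfr.symm

lemma aux_charp {q g : ℕ} (hg : 1 < g) (hq : q = 2 * g + 1) (p : ℕ) (hp : p.Prime)
    [CharP K p] (hqK : (q : K) ≠ 0)
    (hord : orderOf ((p : ℕ) : ZMod q) = 2 * g)
    {ζ : K} (hζ : IsPrimitiveRoot ζ q)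
    (h : Polynomial (ZMod p)) (hdeg : h.natDegree ≤ 2 * g)
    (h0 : h.coeff 0 = 0) (h1 : h.coeff 1 ≠ 0)
    (hroot : letI : Algebra (ZMod p) K := ZMod.algebra _ _; aeval ζ h = 0) : False := by
  letI : Algebra (ZMod p) K := ZMod.algebra _ _
  haveI : Fact p.Prime := ⟨hp⟩
  classical
  have hq2 : 2 ≤ q := by omega
  have hζ1 : ζ ^ q = 1 := hζ.pow_eq_one
  have hζ0 : ζ ≠ 0 := by
    intro e; rw [e, zero_pow (by omega)] at hζ1; exact zero_ne_one hζ1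
  -- ζ is integral over ZMod p
  have hint : IsIntegral (ZMod p) ζ := by
    refine ⟨X ^ q - C 1, monic_X_pow_sub_C 1 (by omega), ?_⟩
    simp [hζ1]
  set m := minpoly (ZMod p) ζ with hm
  -- all ζ ^ (p ^ k) are roots of m
  have hroots : ∀ k : ℕ, aeval (ζ ^ p ^ k) m = 0 := by
    intro k
    induction k with
    | zero => rw [pow_zero, pow_one]; exact minpoly.aeval _ _
    | succ n ih =>
        have := aux_frob_root p hp m (ζ ^ p ^ n) ih
        rwa [← pow_mul, ← pow_succ] at this
  -- p is invertible mod q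
  have hpq : ¬ (p ∣ q) := by
    intro hd
    apply hqK
    obtain ⟨c, rfl⟩ := hd
    push_cast
    rw [CharP.cast_eq_zero K p, zero_mul]
  have hcop : Nat.Coprime p q := (Nat.Prime.coprime_iff_not_dvd hp).mpr hpq
  -- injectivity of k ↦ ζ ^ p ^ k on range (2g)
  have hinj : Set.InjOn (fun k => ζ ^ p ^ k) (Finset.range (2 * g)) := by
    intro i hi j hj hij
    simp only [coe_range, Set.mem_Iio] at hi hj
    have hmod : ∀ a : ℕ, ζ ^ a = ζ ^ (a % q) := by
      intro a
      conv_lhs => rw [← Nat.div_add_mod a q]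
      rw [pow_add, pow_mul, hζ1, one_pow, one_mul]
    have : ζ ^ (p ^ i % q) = ζ ^ (p ^ j % q) := by
      rw [← hmod, ← hmod]; exact hij
    have hij' : p ^ i % q = p ^ j % q :=
      hζ.pow_inj (Nat.mod_lt _ (by omega)) (Nat.mod_lt _ (by omega)) this
    have hzq : ((p : ZMod q)) ^ i = ((p : ZMod q)) ^ j := by
      have : ((p ^ i : ℕ) : ZMod q) = ((p ^ j : ℕ) : ZMod q) :=
        (ZMod.natCast_eq_natCast_iff _ _ _).mpr hij'
      push_cast at this
      exact this
    -- use units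
    haveI : NeZero q := ⟨by omega⟩
    set u := ZMod.unitOfCoprime p hcop with hu
    have hcoe : ((u : ZMod q)) = (p : ZMod q) := ZMod.coe_unitOfCoprime p hcop
    have huij : u ^ i = u ^ j := by
      apply Units.ext
      push_cast [hcoe]
      exact hzq
    have hou : orderOf u = 2 * g := by
      rw [← orderOf_units, hcoe, hord]
    have := pow_injOn_Iio_orderOf (x := u) (by rw [hou]; exact Set.mem_Iio.mpr hi)
      (by rw [hou]; exact Set.mem_Iio.mpr hj) huij
    exact this
  -- m has at least 2g distinct roots in K, so natDegree m ≥ 2g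
  have hmne : m ≠ 0 := minpoly.ne_zero hint
  have hmapne : m.map (algebraMap (ZMod p) K) ≠ 0 :=
    (Polynomial.map_ne_zero_iff (algebraMap (ZMod p) K).injective).mpr hmne
  have hsub : (Finset.range (2 * g)).image (fun k => ζ ^ p ^ k) ⊆
      (m.map (algebraMap (ZMod p) K)).roots.toFinset := by
    intro x hx
    simp only [mem_image] at hx
    obtain ⟨k, _, rfl⟩ := hx
    rw [Multiset.mem_toFinset, mem_roots hmapne, IsRoot.def, eval_map, ← aeval_def]
    exact hroots k
  have hdegm : 2 * g ≤ m.natDegree := by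
    have c1 : ((Finset.range (2 * g)).image (fun k => ζ ^ p ^ k)).card = 2 * g := by
      rw [Finset.card_image_of_injOn hinj, card_range]
    calc 2 * g = _ := c1.symm
      _ ≤ (m.map (algebraMap (ZMod p) K)).roots.toFinset.card := Finset.card_le_card hsub
      _ ≤ (m.map (algebraMap (ZMod p) K)).roots.card := Multiset.toFinset_card_le _
      _ ≤ (m.map (algebraMap (ZMod p) K)).natDegree := Polynomial.card_roots' _
      _ = m.natDegree := natDegree_map _
  -- write h = X * h'
  obtain ⟨h', rfl⟩ := Polynomial.X_dvd_iff.mpr h0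
  have hh'0 : h'.coeff 0 ≠ 0 := by
    rwa [coeff_X_mul] at h1
  have hh'ne : h' ≠ 0 := fun e => hh'0 (by simp [e])
  have hroot' : aeval ζ h' = 0 := by
    rw [map_mul, aeval_X] at hroot
    exact (mul_eq_zero.mp hroot).resolve_left hζ0
  have hdvd : m ∣ h' := minpoly.dvd _ _ hroot'
  have := Polynomial.natDegree_le_of_dvd hdvd hh'ne
  have hdegh' : h'.natDegree + 1 = (X * h').natDegree := by
    rw [natDegree_mul X_ne_zero hh'ne, natDegree_X, add_comm]
  omega

end CharP


theorem stmt_13 (K : Type*) [Field K] [IsAlgClosed K] [DecidableEq K]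
    (g : ℕ) (hg : 1 < g)
    (hchar : ((2 * (2 * g + 1) : ℕ) : K) ≠ 0)
    (hstar : ringChar K = 0 ∨
      (Nat.Prime (2 * g + 1) ∧ (ringChar K).Prime ∧ ringChar K ≠ 2 ∧
        orderOf ((ringChar K : ℕ) : ZMod (2 * g + 1)) = 2 * g))
    (J : Finset K) (hJ : J ⊆ Mset K (2 * g + 1)) (hJcard : J.card = g)
    (ε1 ε2 : K) (h1 : ε1 ∈ Mset K (2 * g + 1)) (h2 : ε2 ∈ Mset K (2 * g + 1))
    (h12 : ε1 ≠ ε2) :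
    (PsiB J ((ε1 - 1)⁻¹) * PsiB (Mset K (2 * g + 1) \ J) ((ε2 - 1)⁻¹) -
      PsiB J ((ε2 - 1)⁻¹) * PsiB (Mset K (2 * g + 1) \ J) ((ε1 - 1)⁻¹)).degree
      = (2 * g - 1 : ℕ) := by
  have hqK : ((2 * g + 1 : ℕ) : K) ≠ 0 := by
    intro h
    apply hchar
    push_cast at h ⊢
    rw [h, mul_zero]
  haveI : NeZero ((2 * g + 1 : ℕ) : K) := ⟨hqK⟩
  obtain ⟨ζ, hζ⟩ := HasEnoughRootsOfUnity.exists_primitiveRoot K (2 * g + 1)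
  have hq1 : 1 < 2 * g + 1 := by omega
  have hmem : ∀ x : K, x ∈ Mset K (2 * g + 1) ↔ x ^ (2 * g + 1) = 1 ∧ x ≠ 1 := by
    intro x
    simp [Mset, Polynomial.mem_nthRootsFinset (by omega : 0 < 2 * g + 1)]
  -- the roots of unity as an image
  have hinjIco : ∀ a ∈ Finset.Ico 1 (2 * g + 1), ∀ b ∈ Finset.Ico 1 (2 * g + 1),
      ζ ^ a = ζ ^ b → a = b := by
    intro a ha b hb hab
    simp only [mem_Ico] at ha hb
    exact hζ.pow_inj (by omega) (by omega) hab
  have hMeq : Mset K (2 * g + 1) = (Finset.Ico 1 (2 * g + 1)).image (ζ ^ ·) := by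
    ext x
    rw [hmem]
    simp only [mem_image, mem_Ico]
    constructor
    · rintro ⟨hx1, hxne⟩
      haveI : NeZero (2 * g + 1) := ⟨by omega⟩
      obtain ⟨i, hik, rfl⟩ := hζ.eq_pow_of_pow_eq_one hx1
      have hi0 : i ≠ 0 := by
        intro e
        rw [e, pow_zero] at hxne
        exact hxne rfl
      exact ⟨i, ⟨by omega, hik⟩, rfl⟩
    · rintro ⟨a, ha, rfl⟩
      refine ⟨?_, hζ.pow_ne_one_of_pos_of_lt (by omega) (by omega)⟩
      rw [← pow_mul, mul_comm, pow_mul, hζ.pow_eq_one, one_pow]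
  have hJcsub : Mset K (2 * g + 1) \ J ⊆ Mset K (2 * g + 1) := Finset.sdiff_subset
  have hMcard : (Mset K (2 * g + 1)).card = 2 * g := by
    rw [hMeq, Finset.card_image_of_injOn hinjIco, Nat.card_Ico]
    omega
  have hJccard : (Mset K (2 * g + 1) \ J).card = g := by
    rw [Finset.card_sdiff_of_subset hJ, hMcard, hJcard]
    omega
  -- sum of all the roots
  have hsum0 : ∑ a ∈ Finset.range (2 * g + 1), ζ ^ a = 0 := by
    rw [geom_sum_eq (hζ.ne_one hq1), hζ.pow_eq_one, sub_self, zero_div]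
  have hrange : Finset.range (2 * g + 1) = insert 0 (Finset.Ico 1 (2 * g + 1)) := by
    ext a
    simp only [mem_range, mem_insert, mem_Ico]
    omega
  have hMsum : ∑ ε ∈ Mset K (2 * g + 1), ε = -1 := by
    rw [hMeq, Finset.sum_image hinjIco]
    rw [hrange, Finset.sum_insert (by simp), pow_zero] at hsum0
    linear_combination hsum0
  have hTsum : (∑ ε ∈ J, ε) + (∑ ε ∈ Mset K (2 * g + 1) \ J, ε) = -1 := by
    rw [add_comm, Finset.sum_sdiff hJ, hMsum]
  -- the key non-vanishing
  have hkey : (∑ ε ∈ J, ε) - (∑ ε ∈ Mset K (2 * g + 1) \ J, ε) ≠ 0 := by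
    rcases hstar with hchar0 | ⟨hqprime, hpprime, hp2, hord⟩
    · -- characteristic zero
      have hcp := ringChar.charP K
      rw [hchar0] at hcp
      haveI := hcp
      haveI : CharZero K := CharP.charP_to_charZero K
      have hint : IsIntegral ℤ (∑ ε ∈ J, ε) := by
        apply IsIntegral.sum
        intro ε hε
        refine ⟨X ^ (2 * g + 1) - Polynomial.C 1, monic_X_pow_sub_C 1 (by omega), ?_⟩
        simp [((hmem ε).mp (hJ hε)).1]
      intro e
      apply aux_char0 hint
      linear_combination e + hTsum
    · -- characteristic p
      haveI : CharP K (ringChar K) := ringChar.charP K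
      haveI : Fact (ringChar K).Prime := ⟨hpprime⟩
      haveI : Fact (1 < ringChar K) := ⟨hpprime.one_lt⟩
      letI : Algebra (ZMod (ringChar K)) K := ZMod.algebra _ _
      intro e
      have heq : (∑ ε ∈ J, ε) = ∑ ε ∈ Mset K (2 * g + 1) \ J, ε := sub_eq_zero.mp e
      set h : Polynomial (ZMod (ringChar K)) :=
        ∑ a ∈ Finset.Ico 1 (2 * g + 1),
          monomial a (if ζ ^ a ∈ J then (1 : ZMod (ringChar K)) else -1) with hh
      have hcoeff : ∀ b, h.coeff b = if b ∈ Finset.Ico 1 (2 * g + 1) then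
          (if ζ ^ b ∈ J then (1 : ZMod (ringChar K)) else -1) else 0 := by
        intro b
        rw [hh, finset_sum_coeff]
        simp only [coeff_monomial]
        exact Finset.sum_ite_eq' _ _ _
      refine aux_charp hg rfl (ringChar K) hpprime hqK hord hζ h ?_ ?_ ?_ ?_
      · rw [hh]
        apply Polynomial.natDegree_sum_le_of_forall_le
        intro a ha
        refine le_trans (natDegree_monomial_le _) ?_
        simp only [mem_Ico] at ha
        omega
      · rw [hcoeff]
        simp
      · rw [hcoeff]
        have : (1 : ℕ) ∈ Finset.Ico 1 (2 * g + 1) := by simp; omega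
        rw [if_pos this]
        split_ifs
        · exact one_ne_zero
        · exact neg_ne_zero.mpr one_ne_zero
      · rw [hh, map_sum]
        have step : ∀ a ∈ Finset.Ico 1 (2 * g + 1),
            aeval ζ (monomial a (if ζ ^ a ∈ J then (1 : ZMod (ringChar K)) else -1))
            = (if ζ ^ a ∈ J then ζ ^ a else -(ζ ^ a)) := by
          intro a _
          rw [aeval_monomial, apply_ite (algebraMap (ZMod (ringChar K)) K),
            map_one, map_neg, map_one]
          split_ifs <;> ring
        rw [Finset.sum_congr rfl step, Finset.sum_ite]
        have hJim : ∑ a ∈ (Finset.Ico 1 (2 * g + 1)).filter (fun a => ζ ^ a ∈ J), ζ ^ a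
            = ∑ ε ∈ J, ε := by
          have himg : ((Finset.Ico 1 (2 * g + 1)).filter (fun a => ζ ^ a ∈ J)).image (ζ ^ ·)
              = J := by
            ext x
            simp only [mem_image, mem_filter]
            constructor
            · rintro ⟨a, ⟨_, haJ⟩, rfl⟩
              exact haJ
            · intro hx
              have := hJ hx
              rw [hMeq] at this
              simp only [mem_image] at this
              obtain ⟨a, ha, rfl⟩ := this
              exact ⟨a, ⟨ha, hx⟩, rfl⟩
          have h' : ∑ ε ∈ ((Finset.Ico 1 (2 * g + 1)).filter (fun a => ζ ^ a ∈ J)).image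
                (fun x => ζ ^ x), ε
              = ∑ a ∈ (Finset.Ico 1 (2 * g + 1)).filter (fun a => ζ ^ a ∈ J), ζ ^ a :=
            Finset.sum_image (fun a ha b hb hab =>
              hinjIco a (Finset.mem_of_mem_filter _ ha) b
                (Finset.mem_of_mem_filter _ hb) hab)
          rw [himg] at h'
          exact h'.symm
        have hCim : ∑ a ∈ (Finset.Ico 1 (2 * g + 1)).filter (fun a => ¬ ζ ^ a ∈ J), ζ ^ a
            = ∑ ε ∈ Mset K (2 * g + 1) \ J, ε := by
          have himg : ((Finset.Ico 1 (2 * g + 1)).filter (fun a => ¬ ζ ^ a ∈ J)).image (ζ ^ ·)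
              = Mset K (2 * g + 1) \ J := by
            ext x
            simp only [mem_image, mem_filter, mem_sdiff]
            constructor
            · rintro ⟨a, ⟨ha, haJ⟩, rfl⟩
              refine ⟨?_, haJ⟩
              rw [hMeq]
              exact Finset.mem_image.mpr ⟨a, ha, rfl⟩
            · rintro ⟨hxM, hxJ⟩
              rw [hMeq] at hxM
              simp only [mem_image] at hxM
              obtain ⟨a, ha, rfl⟩ := hxM
              exact ⟨a, ⟨ha, hxJ⟩, rfl⟩
          have h' : ∑ ε ∈ ((Finset.Ico 1 (2 * g + 1)).filter (fun a => ¬ ζ ^ a ∈ J)).image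
                (fun x => ζ ^ x), ε
              = ∑ a ∈ (Finset.Ico 1 (2 * g + 1)).filter (fun a => ¬ ζ ^ a ∈ J), ζ ^ a :=
            Finset.sum_image (fun a ha b hb hab =>
              hinjIco a (Finset.mem_of_mem_filter _ ha) b
                (Finset.mem_of_mem_filter _ hb) hab)
          rw [himg] at h'
          exact h'.symm
        rw [hJim]
        have : ∑ a ∈ (Finset.Ico 1 (2 * g + 1)).filter (fun a => ¬ ζ ^ a ∈ J), -(ζ ^ a)
            = -∑ a ∈ (Finset.Ico 1 (2 * g + 1)).filter (fun a => ¬ ζ ^ a ∈ J), ζ ^ a := by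
          rw [Finset.sum_neg_distrib]
        rw [this, hCim, heq, add_neg_cancel]
  -- non-vanishing of η1 - η2
  have hη : (ε1 - 1)⁻¹ ≠ (ε2 - 1)⁻¹ := by
    intro e
    exact h12 (by simpa [sub_left_inj] using inv_injective e)
  -- everything in sight is ≠ 1
  have hM1 : ∀ ε ∈ Mset K (2 * g + 1), ε ≠ 1 := fun ε hε => ((hmem ε).mp hε).2
  have hJ1 : ∀ ε ∈ J, ε ≠ 1 := fun ε hε => hM1 ε (hJ hε)
  have hJc1 : ∀ ε ∈ Mset K (2 * g + 1) \ J, ε ≠ 1 := fun ε hε => hM1 ε (hJcsub hε)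
  -- factorizations
  obtain ⟨A1, hA1def⟩ : ∃ A : K[X], ∏ ε ∈ J, (X + C ((ε1 - 1)⁻¹ * (ε - 1))) = A := ⟨_, rfl⟩
  obtain ⟨A2, hA2def⟩ : ∃ A : K[X], ∏ ε ∈ J, (X + C ((ε2 - 1)⁻¹ * (ε - 1))) = A := ⟨_, rfl⟩
  obtain ⟨B1, hB1def⟩ : ∃ A : K[X],
    ∏ ε ∈ Mset K (2 * g + 1) \ J, (X + C ((ε1 - 1)⁻¹ * (ε - 1))) = A := ⟨_, rfl⟩
  obtain ⟨B2, hB2def⟩ : ∃ A : K[X],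
    ∏ ε ∈ Mset K (2 * g + 1) \ J, (X + C ((ε2 - 1)⁻¹ * (ε - 1))) = A := ⟨_, rfl⟩
  obtain ⟨P, hPdef⟩ : ∃ P : K,
    (∏ ε ∈ J, (ε - 1)⁻¹) * (∏ ε ∈ Mset K (2 * g + 1) \ J, (ε - 1)⁻¹) = P := ⟨_, rfl⟩
  have hPne : P ≠ 0 := by
    rw [← hPdef]
    apply mul_ne_zero <;>
      exact Finset.prod_ne_zero_iff.mpr fun ε hε =>
        inv_ne_zero (sub_ne_zero.mpr (by first | exact hJ1 ε hε | exact hJc1 ε hε))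
  have hexp : PsiB J ((ε1 - 1)⁻¹) * PsiB (Mset K (2 * g + 1) \ J) ((ε2 - 1)⁻¹) -
      PsiB J ((ε2 - 1)⁻¹) * PsiB (Mset K (2 * g + 1) \ J) ((ε1 - 1)⁻¹) =
      C P * (A1 * B2 - A2 * B1) := by
    rw [psib_factor J hJ1, psib_factor J hJ1, psib_factor _ hJc1, psib_factor _ hJc1,
      hA1def, hA2def, hB1def, hB2def, ← hPdef, C_mul]
    ring
  -- degrees and coefficients
  have hA1m : A1.Monic := hA1def ▸ prodlin_monic _ _
  have hA2m : A2.Monic := hA2def ▸ prodlin_monic _ _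
  have hB1m : B1.Monic := hB1def ▸ prodlin_monic _ _
  have hB2m : B2.Monic := hB2def ▸ prodlin_monic _ _
  have hA1d : A1.natDegree = g := by rw [← hA1def, prodlin_natDegree, hJcard]
  have hA2d : A2.natDegree = g := by rw [← hA2def, prodlin_natDegree, hJcard]
  have hB1d : B1.natDegree = g := by rw [← hB1def, prodlin_natDegree, hJccard]
  have hB2d : B2.natDegree = g := by rw [← hB2def, prodlin_natDegree, hJccard]
  have hd12 : (A1 * B2).natDegree = 2 * g := by
    rw [hA1m.natDegree_mul hB2m, hA1d, hB2d]; omega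
  have hd21 : (A2 * B1).natDegree = 2 * g := by
    rw [hA2m.natDegree_mul hB1m, hA2d, hB1d]; omega
  have hcoeff_top : (A1 * B2 - A2 * B1).coeff (2 * g) = 0 := by
    rw [coeff_sub]
    have e1 : (A1 * B2).coeff (2 * g) = 1 := by
      rw [← hd12]; exact (hA1m.mul hB2m).coeff_natDegree
    have e2 : (A2 * B1).coeff (2 * g) = 1 := by
      rw [← hd21]; exact (hA2m.mul hB1m).coeff_natDegree
    rw [e1, e2, sub_self]
  have hcoeff_next : (A1 * B2 - A2 * B1).coeff (2 * g - 1) =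
      ((ε1 - 1)⁻¹ - (ε2 - 1)⁻¹) * ((∑ ε ∈ J, ε) - (∑ ε ∈ Mset K (2 * g + 1) \ J, ε)) := by
    have e1 : (A1 * B2).coeff (2 * g - 1) = (ε1 - 1)⁻¹ * (∑ ε ∈ J, (ε - 1))
        + (ε2 - 1)⁻¹ * (∑ ε ∈ Mset K (2 * g + 1) \ J, (ε - 1)) := by
      have hnc := Polynomial.nextCoeff_of_natDegree_pos
        (p := A1 * B2) (by rw [hd12]; omega)
      rw [hd12] at hnc
      rw [← hnc, hA1m.nextCoeff_mul hB2m, ← hA1def, ← hB2def, prodlin_nextCoeff,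
        prodlin_nextCoeff]
    have e2 : (A2 * B1).coeff (2 * g - 1) = (ε2 - 1)⁻¹ * (∑ ε ∈ J, (ε - 1))
        + (ε1 - 1)⁻¹ * (∑ ε ∈ Mset K (2 * g + 1) \ J, (ε - 1)) := by
      have hnc := Polynomial.nextCoeff_of_natDegree_pos
        (p := A2 * B1) (by rw [hd21]; omega)
      rw [hd21] at hnc
      rw [← hnc, hA2m.nextCoeff_mul hB1m, ← hA2def, ← hB1def, prodlin_nextCoeff,
        prodlin_nextCoeff]
    have eJ : ∑ ε ∈ J, (ε - 1) = (∑ ε ∈ J, ε) - g := by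
      rw [Finset.sum_sub_distrib, Finset.sum_const, hJcard, nsmul_eq_mul, mul_one]
    have eJc : ∑ ε ∈ Mset K (2 * g + 1) \ J, (ε - 1)
        = (∑ ε ∈ Mset K (2 * g + 1) \ J, ε) - g := by
      rw [Finset.sum_sub_distrib, Finset.sum_const, hJccard, nsmul_eq_mul, mul_one]
    rw [coeff_sub, e1, e2, eJ, eJc]
    ring
  have hcoeff_ne : (A1 * B2 - A2 * B1).coeff (2 * g - 1) ≠ 0 := by
    rw [hcoeff_next]
    exact mul_ne_zero (sub_ne_zero.mpr hη) hkey
  have hGne : A1 * B2 - A2 * B1 ≠ 0 := fun e => hcoeff_ne (by simp [e])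
  have hGnd : (A1 * B2 - A2 * B1).natDegree = 2 * g - 1 := by
    have hGle : (A1 * B2 - A2 * B1).natDegree ≤ 2 * g :=
      le_trans (natDegree_sub_le _ _) (by rw [hd12, hd21]; omega)
    have hne : (A1 * B2 - A2 * B1).natDegree ≠ 2 * g := by
      intro e
      apply hGne
      rw [← leadingCoeff_eq_zero, leadingCoeff, e]
      exact hcoeff_top
    have hge : 2 * g - 1 ≤ (A1 * B2 - A2 * B1).natDegree :=
      le_natDegree_of_ne_zero hcoeff_ne
    omega
  rw [hexp, degree_C_mul hPne, degree_eq_natDegree hGne, hGnd]
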